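/- Let I be a monomial ideal of E with linear quotients and decomposition function g : M(I) → G(I). If u ∈ M(I) can be written u = v·w with v ∈ G(I), w a monomial, and set(v) ∩ supp(w) = ∅, then v = g(u). Hence the decomposition function is the unique function satisfying the factorization property of Lemma (a). -/

import Mathlib

open ExteriorAlgebra

/-- The `i`-th basis monomial `e_i` of the exterior algebra `E = K⟨e_1,…,e_n⟩`. -/
noncomputable def e (K : Type) [Field K] {n : ℕ} (i : Fin n) :
    ExteriorAlgebra K (Fin n → K) :=
  ι K (Pi.single i 1)

/-- The monomial `e_μ = e_{i_1} ∧ ⋯ ∧ e_{i_d}` for `μ = {i_1 < ⋯ < i_d}`. -/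
noncomputable def eMon (K : Type) [Field K] {n : ℕ} (μ : Finset (Fin n)) :
    ExteriorAlgebra K (Fin n → K) :=
  ((μ.sort (· ≤ ·)).map (e K)).prod

/-- The ideal `(u_1, …, u_j)` generated by the monomials `u_i = e_{μ_i}`, `i ≤ j`. -/
noncomputable def Iupto (K : Type) [Field K] {n r : ℕ}
    (μs : Fin r → Finset (Fin n)) (j : Fin r) :
    Ideal (ExteriorAlgebra K (Fin n → K)) :=
  Ideal.span {v | ∃ i, i ≤ j ∧ v = eMon K (μs i)}

/-- The ideal `(u_1, …, u_{j-1})` generated by the monomials `u_i = e_{μ_i}`, `i < j`. -/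
noncomputable def Ibelow (K : Type) [Field K] {n r : ℕ}
    (μs : Fin r → Finset (Fin n)) (j : Fin r) :
    Ideal (ExteriorAlgebra K (Fin n → K)) :=
  Ideal.span {v | ∃ i, i < j ∧ v = eMon K (μs i)}

/-- `set(u_j) = {k : e_k ∈ (u_1,…,u_{j-1}) : (u_j)}`. -/
noncomputable def setIdx (K : Type) [Field K] {n r : ℕ}
    (μs : Fin r → Finset (Fin n)) (j : Fin r) : Set (Fin n) :=
  {k | e K k * eMon K (μs j) ∈ Ibelow K μs j}

/-- The monomial ideal generated by `u_1, …, u_r` has linear quotients with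
respect to this order: each colon ideal `(u_1,…,u_{j-1}) : (u_j)` is generated
by a subset of the variables `e_1, …, e_n`. -/
def LinearQuotients (K : Type) [Field K] {n r : ℕ}
    (μs : Fin r → Finset (Fin n)) : Prop :=
  ∀ j : Fin r, ∃ S : Finset (Fin n),
    {f : ExteriorAlgebra K (Fin n → K) | f * eMon K (μs j) ∈ Ibelow K μs j}
      = (Ideal.span {v | ∃ k ∈ S, v = e K k} : Set (ExteriorAlgebra K (Fin n → K)))

/-- `g(e_ν) = u_j`: `j` is the least index with `e_ν ∈ (u_1, …, u_j)`. -/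
noncomputable def IsDecomp (K : Type) [Field K] {n r : ℕ}
    (μs : Fin r → Finset (Fin n)) (ν : Finset (Fin n)) (j : Fin r) : Prop :=
  eMon K ν ∈ Iupto K μs j ∧ ∀ i, i < j → eMon K ν ∉ Iupto K μs i

theorem prod_perm_sign {K : Type} [Field K] {n : ℕ} {l l' : List (Fin n → K)}
    (h : l.Perm l') :
    (l.map (ι K)).prod = (l'.map (ι K)).prod ∨
      (l.map (ι K)).prod = -(l'.map (ι K)).prod := by
  induction h with
  | nil => exact Or.inl rfl
  | cons x h ih =>
    simp only [List.map_cons, List.prod_cons]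
    rcases ih with ih | ih
    · exact Or.inl (by rw [ih])
    · exact Or.inr (by rw [ih, mul_neg])
  | swap x y l =>
    simp only [List.map_cons, List.prod_cons]
    right
    have : ι K y * ι K x = -(ι K x * ι K y) :=
      eq_neg_of_add_eq_zero_left (by rw [add_comm]; exact ι_add_mul_swap x y)
    rw [← mul_assoc, ← mul_assoc, this, neg_mul]
  | trans h1 h2 ih1 ih2 =>
    rcases ih1 with i1 | i1 <;> rcases ih2 with i2 | i2
    · exact Or.inl (i1.trans i2)
    · exact Or.inr (i1.trans i2)
    · exact Or.inr (by rw [i1, i2])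
    · exact Or.inl (by rw [i1, i2, neg_neg])

theorem eMon_union {K : Type} [Field K] {n : ℕ} {a b : Finset (Fin n)}
    (hd : Disjoint a b) :
    eMon K (a ∪ b) = eMon K a * eMon K b ∨
      eMon K (a ∪ b) = -(eMon K a * eMon K b) := by
  have hperm : ((a ∪ b).sort (· ≤ ·)).Perm (a.sort (· ≤ ·) ++ b.sort (· ≤ ·)) := by
    rw [List.perm_ext_iff_of_nodup (Finset.sort_nodup _ _)]
    · intro x
      simp [Finset.mem_sort, Finset.mem_union]
    · refine List.Nodup.append (Finset.sort_nodup _ _) (Finset.sort_nodup _ _) ?_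
      intro x hx hx'
      rw [Finset.mem_sort] at hx hx'
      exact (Finset.disjoint_left.mp hd hx) hx'
  have := prod_perm_sign (K := K) (hperm.map fun i => (Pi.single i 1 : Fin n → K))
  simp only [← List.map_map, List.map_append, List.prod_append] at this
  have he : ∀ (l : List (Fin n)),
      (List.map (ι K) (List.map (fun i => (Pi.single i 1 : Fin n → K)) l)) = l.map (e K) := by
    intro l; rw [List.map_map]; rfl
  rw [he, he, he] at this
  rcases this with h | h
  · exact Or.inl h
  · exact Or.inr h

theorem eMon_eq_iotaMulti {K : Type} [Field K] {n : ℕ} (σ : Finset (Fin n)) :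
    eMon K σ = ιMulti K σ.card (fun i => Pi.single (σ.orderEmbOfFin rfl i) 1) := by
  rw [ιMulti_apply, eMon]
  congr 1
  have hlen : (σ.sort (· ≤ ·)).length = σ.card := Finset.length_sort _
  rw [← List.ofFn_getElem (xs := σ.sort (· ≤ ·) |>.map (e K))]
  have : ((σ.sort (· ≤ ·)).map (e K)).length = σ.card := by simp [hlen]
  rw [List.ofFn_congr this]
  congr 1
  funext i
  simp only [List.getElem_map]
  show e K _ = e K _
  congr 1

theorem eMon_ne_zero {K : Type} [Field K] {n : ℕ} (σ : Finset (Fin n)) :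
    eMon K σ ≠ 0 := by
  set d := σ.card with hd
  set s : Fin d ↪o Fin n := σ.orderEmbOfFin rfl with hs
  set F : (Fin n → K) [⋀^Fin d]→ₗ[K] K :=
    (Matrix.detRowAlternating : (Fin d → K) [⋀^Fin d]→ₗ[K] K).compLinearMap
      (LinearMap.funLeft K K s) with hF
  set f : ∀ i : ℕ, (Fin n → K) [⋀^Fin i]→ₗ[K] K :=
    Function.update (fun _ => 0) d F with hf
  intro h0
  have := congrArg (liftAlternating (R := K) f) h0
  rw [eMon_eq_iotaMulti, map_zero, liftAlternating_apply_ιMulti] at this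
  have hfd : f d = F := Function.update_self _ _ _
  rw [hfd, hF, AlternatingMap.compLinearMap_apply] at this
  have key : (fun i => (LinearMap.funLeft K K ⇑s) ((Pi.single ((σ.orderEmbOfFin rfl) i) (1:K) : Fin n → K)))
      = (1 : Matrix (Fin d) (Fin d) K) := by
    funext a b
    show (Pi.single (s a) (1:K) : Fin n → K) (s b) = _
    simp only [Matrix.one_apply, Pi.single_apply]
    by_cases hab : a = b
    · simp [hab]
    · rw [if_neg (fun hc => hab (s.injective hc).symm), if_neg hab]
  rw [key] at this
  rw [show (Matrix.detRowAlternating (1 : Matrix (Fin d) (Fin d) K)) = Matrix.det 1 from rfl,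
    Matrix.det_one] at this
  exact one_ne_zero this

theorem eMon_mem_var_span {K : Type} [Field K] {n : ℕ} (σ : Finset (Fin n))
    (S : Finset (Fin n))
    (hmem : eMon K σ ∈ Ideal.span {v : ExteriorAlgebra K (Fin n → K) | ∃ k ∈ S, v = e K k})
    (hdisj : ∀ k ∈ S, k ∉ σ) : False := by
  set f0 : (Fin n → K) →ₗ[K] (Fin n → K) :=
    LinearMap.pi (fun i => if i ∈ S then 0 else LinearMap.proj i) with hf0
  set φ := ExteriorAlgebra.map f0 with hφ
  have hf0app : ∀ (x : Fin n → K) (i : Fin n), f0 x i = if i ∈ S then 0 else x i := by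
    intro x i
    rw [hf0, LinearMap.pi_apply]
    by_cases h : i ∈ S <;> simp [h]
  have hek0 : ∀ k ∈ S, φ (e K k) = 0 := by
    intro k hk
    rw [e, hφ, map_apply_ι]
    have : f0 (Pi.single k 1) = 0 := by
      funext i
      rw [hf0app]
      by_cases h : i ∈ S
      · simp [h]
      · simp only [h, if_false]
        exact Pi.single_eq_of_ne (fun hik : i = k => h (by rw [hik]; exact hk)) 1
    rw [this, map_zero]
  have hek1 : ∀ k ∉ S, φ (e K k) = e K k := by
    intro k hk
    rw [e, hφ, map_apply_ι]
    congr 1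
    funext i
    rw [hf0app]
    by_cases h : i ∈ S
    · have hik : i ≠ k := fun hik => hk (by rw [← hik]; exact h)
      simp [h, Pi.single_eq_of_ne hik]
    · simp [h]
  -- φ kills the ideal
  have hker : Ideal.span {v : ExteriorAlgebra K (Fin n → K) | ∃ k ∈ S, v = e K k}
      ≤ RingHom.ker φ.toRingHom := by
    rw [Ideal.span_le]
    rintro v ⟨k, hk, rfl⟩
    exact hek0 k hk
  have hzero : φ (eMon K σ) = 0 := hker hmem
  -- φ fixes eMon σ
  have hfix : φ (eMon K σ) = eMon K σ := by
    rw [eMon, map_list_prod, List.map_map]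
    congr 1
    apply List.map_congr_left
    intro k hk
    rw [Finset.mem_sort] at hk
    exact hek1 k (fun hkS => hdisj k hkS hk)
  exact eMon_ne_zero σ (hfix ▸ hzero)

/-- Let `I` have linear quotients with respect to `u_1, …, u_r` and let `g` be
the decomposition function. If a monomial `u = e_ν ∈ M(I)` can be written as
`u = v·w` with `v = u_l ∈ G(I)`, `w` a monomial, and `set(v) ∩ supp(w) = ∅`,
then `v = g(u)`; i.e. `g` is uniquely determined by the factorization property. -/
theorem stmt16 {K : Type} [Field K] {n r : ℕ} (μs : Fin r → Finset (Fin n))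
    (hlq : LinearQuotients K μs)
    (ν : Finset (Fin n)) (l : Fin r)
    (hdiv : μs l ⊆ ν) (hset : setIdx K μs l ∩ ↑(ν \ μs l) = ∅)
    (j : Fin r) (hg : IsDecomp K μs ν j) :
    μs l = μs j := by
  set σ := ν \ μs l with hσ
  have hdisj : Disjoint σ (μs l) := (Finset.sdiff_disjoint : Disjoint σ (μs l))
  have hunion : σ ∪ μs l = ν := by
    rw [hσ, Finset.union_comm]
    exact Finset.union_sdiff_of_subset hdiv
  have hfac : eMon K ν = eMon K σ * eMon K (μs l) ∨
      eMon K ν = -(eMon K σ * eMon K (μs l)) := by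
    rw [← hunion]; exact eMon_union hdisj
  -- `eMon ν ∈ Iupto l`
  have hmeml : eMon K ν ∈ Iupto K μs l := by
    have hgen : eMon K (μs l) ∈ Iupto K μs l :=
      Ideal.subset_span ⟨l, le_refl l, rfl⟩
    rcases hfac with h | h
    · rw [h]; exact Ideal.mul_mem_left _ _ hgen
    · rw [h]; exact neg_mem (Ideal.mul_mem_left _ _ hgen)
  -- minimality gives `j ≤ l`
  have hjl : j ≤ l := by
    by_contra hlt
    exact hg.2 l (lt_of_not_ge hlt) hmeml
  rcases eq_or_lt_of_le hjl with heq | hlt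
  · rw [heq]
  -- now `j < l`, derive a contradiction
  exfalso
  have hbelow : eMon K ν ∈ Ibelow K μs l := by
    refine Ideal.span_mono ?_ hg.1
    rintro v ⟨i, hi, rfl⟩
    exact ⟨i, lt_of_le_of_lt hi hlt, rfl⟩
  have hprod : eMon K σ * eMon K (μs l) ∈ Ibelow K μs l := by
    rcases hfac with h | h
    · rw [← h]; exact hbelow
    · have : eMon K σ * eMon K (μs l) = -eMon K ν := by rw [h, neg_neg]
      rw [this]; exact neg_mem hbelow
  obtain ⟨S, hS⟩ := hlq l
  have hσmem : eMon K σ ∈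
      Ideal.span {v : ExteriorAlgebra K (Fin n → K) | ∃ k ∈ S, v = e K k} := by
    have : eMon K σ ∈ {f : ExteriorAlgebra K (Fin n → K) |
        f * eMon K (μs l) ∈ Ibelow K μs l} := hprod
    rwa [hS] at this
  refine eMon_mem_var_span σ S hσmem ?_
  intro k hk hkσ
  have hek : e K k ∈ Ideal.span {v : ExteriorAlgebra K (Fin n → K) | ∃ k ∈ S, v = e K k} :=
    Ideal.subset_span ⟨k, hk, rfl⟩
  have : e K k ∈ {f : ExteriorAlgebra K (Fin n → K) |
      f * eMon K (μs l) ∈ Ibelow K μs l} := by rwa [hS]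
  have hkset : k ∈ setIdx K μs l := this
  have : k ∈ setIdx K μs l ∩ ↑(ν \ μs l) := ⟨hkset, by rwa [← hσ]⟩
  rw [hset] at this
  exact this
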